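/- In dimension d = 1, let u, u' ∈ ℝ lift to 𝟙ᵢ^α, 𝟙ⱼ^β ∈ ℝˡ with u = γᵢ^α, u' = γⱼ^β. Then the anisotropic lifted TV cost of the jump equals the unlifted cost: sup_{q ∈ K}⟨q, 𝟙ⱼ^β - 𝟙ᵢ^α⟩ = |γⱼ^β - γᵢ^α|, where K := {q ∈ ℝˡ : |q_k| ≤ γ_{k+1}-γ_k ∀k}. -/

import Mathlib

open scoped BigOperators

/-- The lifted representative `𝟙ᵢ^α = α𝟙ᵢ + (1-α)𝟙_{i-1} ∈ ℝˡ` (with zero-based index `i`):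
entries `1` below `i`, value `α` at `i`, `0` above. -/
def oneVec {l : ℕ} (i : Fin l) (α : ℝ) : Fin l → ℝ :=
  fun k => if (k : ℕ) < (i : ℕ) then 1 else if k = i then α else 0

/-- The sublabel value `γᵢ^α = γᵢ + α(γ_{i+1} - γᵢ)` (zero-based index `i`). -/
def gam {l : ℕ} (γ : Fin (l + 1) → ℝ) (i : Fin l) (α : ℝ) : ℝ :=
  γ i.castSucc + α * (γ i.succ - γ i.castSucc)

lemma tele {l : ℕ} (f : Fin (l + 1) → ℝ) :
    ∑ k : Fin l, (f k.succ - f k.castSucc) = f (Fin.last l) - f 0 := by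
  set g : ℕ → ℝ := fun m => f ⟨min m l, by omega⟩ with hg
  have h : ∀ k : Fin l, f k.succ - f k.castSucc = g ((k : ℕ) + 1) - g (k : ℕ) := by
    intro k
    have h1 : (⟨min ((k : ℕ) + 1) l, by omega⟩ : Fin (l + 1)) = k.succ := by
      ext; simp [Nat.min_eq_left k.isLt]
    have h2 : (⟨min (k : ℕ) l, by omega⟩ : Fin (l + 1)) = k.castSucc := by
      ext; simp [Nat.min_eq_left (le_of_lt k.isLt)]
    simp only [hg, h1, h2]
  rw [Finset.sum_congr rfl (fun k _ => h k),
    Fin.sum_univ_eq_sum_range (fun m => g (m + 1) - g m) l, Finset.sum_range_sub g l]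
  have h1 : (⟨min l l, by omega⟩ : Fin (l + 1)) = Fin.last l := by ext; simp
  have h2 : (⟨min 0 l, by omega⟩ : Fin (l + 1)) = 0 := by ext; simp
  simp only [hg, h1, h2]

lemma sum1 {l : ℕ} (γ : Fin (l + 1) → ℝ) (i : Fin l) (α : ℝ) :
    ∑ k : Fin l, oneVec i α k * (γ k.succ - γ k.castSucc) = gam γ i α - γ 0 := by
  set F : Fin (l + 1) → ℝ := fun m => if (m : ℕ) ≤ (i : ℕ) then γ m else gam γ i α with hF
  have h : ∀ k : Fin l, oneVec i α k * (γ k.succ - γ k.castSucc) = F k.succ - F k.castSucc := by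
    intro k
    rcases lt_trichotomy (k : ℕ) (i : ℕ) with hk | hk | hk
    · have a1 : oneVec i α k = 1 := if_pos hk
      have a2 : F k.succ = γ k.succ := if_pos (by simp [Fin.val_succ]; omega)
      have a3 : F k.castSucc = γ k.castSucc := if_pos (by simp [Fin.coe_castSucc]; omega)
      rw [a1, a2, a3]; ring
    · have hki : k = i := Fin.ext hk
      subst hki
      have a1 : oneVec k α k = α := by simp [oneVec]
      have a2 : F k.succ = gam γ k α := if_neg (by simp [Fin.val_succ])
      have a3 : F k.castSucc = γ k.castSucc := if_pos (by simp [Fin.coe_castSucc])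
      rw [a1, a2, a3, gam]; ring
    · have a1 : oneVec i α k = 0 := by
        simp only [oneVec]
        rw [if_neg (by omega), if_neg (fun h => by rw [h] at hk; omega)]
      have a2 : F k.succ = gam γ i α := if_neg (by simp [Fin.val_succ]; omega)
      have a3 : F k.castSucc = gam γ i α := if_neg (by simp [Fin.coe_castSucc]; omega)
      rw [a1, a2, a3]; ring
  rw [Finset.sum_congr rfl (fun k _ => h k), tele]
  have a1 : F (Fin.last l) = gam γ i α := if_neg (by simp only [Fin.val_last]; omega)
  have a2 : F 0 = γ 0 := if_pos (by simp)
  rw [a1, a2]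

lemma sup_box {l : ℕ} (v w : Fin l → ℝ) (hw : ∀ k, 0 ≤ w k)
    (h : (∀ k, 0 ≤ v k) ∨ (∀ k, v k ≤ 0)) :
    sSup {x : ℝ | ∃ q : Fin l → ℝ, (∀ k, |q k| ≤ w k) ∧ x = ∑ k : Fin l, q k * v k}
      = |∑ k : Fin l, v k * w k| := by
  have hb : ∀ x ∈ {x : ℝ | ∃ q : Fin l → ℝ, (∀ k, |q k| ≤ w k) ∧ x = ∑ k : Fin l, q k * v k},
      x ≤ |∑ k : Fin l, v k * w k| := by
    rintro x ⟨q, hq, rfl⟩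
    calc ∑ k : Fin l, q k * v k ≤ ∑ k : Fin l, |q k * v k| :=
          Finset.sum_le_sum fun k _ => le_abs_self _
      _ ≤ ∑ k : Fin l, |v k| * w k := by
          apply Finset.sum_le_sum
          intro k _
          rw [abs_mul, mul_comm]
          exact mul_le_mul_of_nonneg_left (hq k) (abs_nonneg _)
      _ = |∑ k : Fin l, v k * w k| := by
          rcases h with h | h
          · rw [abs_of_nonneg (Finset.sum_nonneg fun k _ => mul_nonneg (h k) (hw k))]
            exact Finset.sum_congr rfl fun k _ => by rw [abs_of_nonneg (h k)]
          · rw [abs_of_nonpos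
              (Finset.sum_nonpos fun k _ => mul_nonpos_of_nonpos_of_nonneg (h k) (hw k)),
              ← Finset.sum_neg_distrib]
            exact Finset.sum_congr rfl fun k _ => by rw [abs_of_nonpos (h k)]; ring
  apply le_antisymm
  · exact csSup_le ⟨0, 0, fun k => by simpa using hw k, by simp⟩ hb
  · apply le_csSup ⟨_, hb⟩
    rcases h with h | h
    · refine ⟨w, fun k => le_of_eq (abs_of_nonneg (hw k)), ?_⟩
      rw [abs_of_nonneg (Finset.sum_nonneg fun k _ => mul_nonneg (h k) (hw k))]
      exact Finset.sum_congr rfl fun k _ => mul_comm _ _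
    · refine ⟨fun k => -w k, fun k => by rw [abs_neg, abs_of_nonneg (hw k)], ?_⟩
      rw [abs_of_nonpos
        (Finset.sum_nonpos fun k _ => mul_nonpos_of_nonpos_of_nonneg (h k) (hw k)),
        ← Finset.sum_neg_distrib]
      exact Finset.sum_congr rfl fun k _ => by ring

theorem anisotropic_lifted_TV_exact {l : ℕ} (γ : Fin (l + 1) → ℝ) (hγ : StrictMono γ)
    (i j : Fin l) (α β : ℝ)
    (hα : α ∈ Set.Icc (0 : ℝ) 1) (hβ : β ∈ Set.Icc (0 : ℝ) 1)
    (K : Set (Fin l → ℝ))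
    (hK : K = {q : Fin l → ℝ | ∀ k : Fin l, |q k| ≤ γ k.succ - γ k.castSucc}) :
    sSup {x : ℝ | ∃ q ∈ K, x = ∑ k : Fin l, q k * (oneVec j β k - oneVec i α k)}
      = |gam γ j β - gam γ i α| := by
  subst hK
  obtain ⟨hα0, hα1⟩ := hα
  obtain ⟨hβ0, hβ1⟩ := hβ
  have hw : ∀ k : Fin l, 0 ≤ γ k.succ - γ k.castSucc := fun k =>
    le_of_lt (sub_pos.2 (hγ (Fin.castSucc_lt_succ (i := k))))
  have hsign : (∀ k, 0 ≤ oneVec j β k - oneVec i α k)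
      ∨ (∀ k, oneVec j β k - oneVec i α k ≤ 0) := by
    rcases lt_trichotomy (i : ℕ) (j : ℕ) with hij | hij | hij
    · left; intro k
      simp only [oneVec]
      split_ifs <;>
        first
          | linarith
          | (exfalso; simp only [Fin.ext_iff] at *; omega)
    · have : i = j := Fin.ext hij
      subst this
      rcases le_total α β with hab | hab
      · left; intro k
        simp only [oneVec]
        split_ifs <;> linarith
      · right; intro k
        simp only [oneVec]
        split_ifs <;> linarith
    · right; intro k
      simp only [oneVec]
      split_ifs <;>
        first
          | linarith
          | (exfalso; simp only [Fin.ext_iff] at *; omega)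
  have key := sup_box (fun k => oneVec j β k - oneVec i α k)
    (fun k => γ k.succ - γ k.castSucc) hw hsign
  have hΔ : ∑ k : Fin l, (oneVec j β k - oneVec i α k) * (γ k.succ - γ k.castSucc)
      = gam γ j β - gam γ i α := by
    simp only [sub_mul]
    rw [Finset.sum_sub_distrib, sum1, sum1]
    ring
  have hset : {x : ℝ | ∃ q ∈ {q : Fin l → ℝ | ∀ k : Fin l, |q k| ≤ γ k.succ - γ k.castSucc},
      x = ∑ k : Fin l, q k * (oneVec j β k - oneVec i α k)}
      = {x : ℝ | ∃ q : Fin l → ℝ, (∀ k, |q k| ≤ γ k.succ - γ k.castSucc)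
          ∧ x = ∑ k : Fin l, q k * (oneVec j β k - oneVec i α k)} := rfl
  rw [hset]
  rw [key, hΔ]
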